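/- Let p be a prime with p ≢ 7 (mod 8). Then the equation x² + y² = −1 has a solution with x, y in the ring of integers of ℚ(√(−p)). -/

import Mathlib

private lemma pos_sq_choice {m a0 : ℤ} (hm : 0 < m) (h : m = a0 ^ 2 ∨ m = -a0 ^ 2) :
    m = a0 ^ 2 := by
  rcases h with h | h
  · exact h
  · exfalso; nlinarith [sq_nonneg a0]

private lemma odd_of_sq_odd {a : ℤ} (h : a ^ 2 % 2 = 1) : a % 2 = 1 := by
  rcases Int.even_or_odd a with ⟨j, rfl⟩ | ⟨j, rfl⟩
  · exfalso
    have h2 : (j + j) ^ 2 = 2 * (2 * j ^ 2) := by ring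
    rw [h2] at h
    omega
  · omega

private lemma descent (p : ℕ) (hp : p.Prime) (hodd : p % 2 = 1) :
    (∃ a b : ℤ, a ^ 2 - (p : ℤ) * b ^ 2 = -1) ∨
    (∃ a b : ℤ, a % 2 = 1 ∧ b % 2 = 1 ∧
      (a ^ 2 - (p : ℤ) * b ^ 2 = -2 ∨ a ^ 2 - (p : ℤ) * b ^ 2 = 2)) := by
  have hpZ : Prime (p : ℤ) := Nat.prime_iff_prime_int.mp hp
  have hp3 : 3 ≤ (p : ℤ) := by have := hp.two_le; omega
  have hpne : (p : ℤ) ≠ 0 := by omega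
  have key : ∀ n : ℕ, ∀ x y : ℤ, 0 ≤ x → x ≤ (n : ℤ) →
      x ^ 2 - (p : ℤ) * y ^ 2 = 1 → y ≠ 0 →
      ((∃ a b : ℤ, a ^ 2 - (p : ℤ) * b ^ 2 = -1) ∨
      (∃ a b : ℤ, a % 2 = 1 ∧ b % 2 = 1 ∧
        (a ^ 2 - (p : ℤ) * b ^ 2 = -2 ∨ a ^ 2 - (p : ℤ) * b ^ 2 = 2))) := by
    intro n
    induction n using Nat.strong_induction_on with
    | _ n ih =>
      intro x y hx0 hxn hxy hy
      have hy1 : 1  ≤ y ^ 2 := by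
        have : 0 < y ^ 2 := by positivity
        linarith
      have hx4 : 4 ≤ x ^ 2 := by
        have h1 : (3 : ℤ) * 1 ≤ (p : ℤ) * y ^ 2 :=
          mul_le_mul hp3 hy1 (by norm_num) (by linarith)
        linarith
      have hx2 : 2 ≤ x := by
        by_contra h
        have hx1 : x ≤ 1 := by omega
        have h2 : 0 ≤ x * (1 - x) := mul_nonneg hx0 (by linarith)
        nlinarith
      rcases Int.even_or_odd x with ⟨k, rfl⟩ | ⟨k, rfl⟩
      · -- x even : x = k + k
        have hk1 : 1 ≤ k := by omega
        rcases Int.even_or_odd y with ⟨l, rfl⟩ | ⟨l, rfl⟩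
        · exfalso
          have h41 : (4 : ℤ) ∣ 1 := ⟨k ^ 2 - (p : ℤ) * l ^ 2, by linear_combination -hxy⟩
          norm_num at h41
        · -- y odd : y = 2l+1
          have hmn : (2 * k - 1) * (2 * k + 1) = (p : ℤ) * (2 * l + 1) ^ 2 := by
            linear_combination hxy
          have hco : IsCoprime (2 * k - 1) (2 * k + 1) := ⟨k, 1 - k, by ring⟩
          have hpd : (p : ℤ) ∣ (2 * k - 1) * (2 * k + 1) := ⟨(2 * l + 1) ^ 2, hmn⟩
          rcases (hpZ.dvd_mul.mp hpd) with ⟨m', hm'⟩ | ⟨n', hn'⟩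
          · -- p ∣ 2k-1, result : b0^2 - p a0^2 = 2
            have h1 : m' * (2 * k + 1) = (2 * l + 1) ^ 2 :=
              mul_left_cancel₀ hpne (by linear_combination hmn - (2 * k + 1) * hm')
            have hm'pos : 0 < m' := by nlinarith
            have hcm : IsCoprime m' (2 * k + 1) :=
              hco.of_isCoprime_of_dvd_left ⟨p, by rw [hm']; ring⟩
            obtain ⟨a0, ha0⟩ := Int.sq_of_isCoprime hcm h1
            have ha0 : m' = a0 ^ 2 := pos_sq_choice hm'pos ha0
            obtain ⟨b0, hb0⟩ := Int.sq_of_isCoprime hcm.symm (by rw [mul_comm]; exact h1)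
            have hb0 : 2 * k + 1 = b0 ^ 2 := pos_sq_choice (by omega) hb0
            -- oddness of m'
            have hm'odd : m' % 2 = 1 := by
              rcases Int.even_or_odd m' with ⟨j, hj⟩ | ⟨j, hj⟩
              · exfalso
                have : (2 : ℤ) ∣ 2 * k - 1 := ⟨(p : ℤ) * j, by rw [hm', hj]; ring⟩
                omega
              · omega
            refine Or.inr ⟨b0, a0, odd_of_sq_odd (by omega), odd_of_sq_odd (by omega),
              Or.inr ?_⟩
            linear_combination -hb0 + (p : ℤ) * ha0 + hm'
          · -- p ∣ 2k+1, result : a0^2 - p b0^2 = -2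
            have h1 : (2 * k - 1) * n' = (2 * l + 1) ^ 2 :=
              mul_left_cancel₀ hpne (by linear_combination hmn - (2 * k - 1) * hn')
            have hn'pos : 0 < n' := by nlinarith
            have hcm : IsCoprime (2 * k - 1) n' :=
              hco.of_isCoprime_of_dvd_right ⟨p, by rw [hn']; ring⟩
            obtain ⟨a0, ha0⟩ := Int.sq_of_isCoprime hcm h1
            have ha0 : 2 * k - 1 = a0 ^ 2 := pos_sq_choice (by omega) ha0
            obtain ⟨b0, hb0⟩ := Int.sq_of_isCoprime hcm.symm (by rw [mul_comm]; exact h1)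
            have hb0 : n' = b0 ^ 2 := pos_sq_choice hn'pos hb0
            have hn'odd : n' % 2 = 1 := by
              rcases Int.even_or_odd n' with ⟨j, hj⟩ | ⟨j, hj⟩
              · exfalso
                have : (2 : ℤ) ∣ 2 * k + 1 := ⟨(p : ℤ) * j, by rw [hn', hj]; ring⟩
                omega
              · omega
            refine Or.inr ⟨a0, b0, odd_of_sq_odd (by omega), odd_of_sq_odd (by omega),
              Or.inl ?_⟩
            linear_combination -ha0 + (p : ℤ) * hb0 + hn'
      · -- x odd : x = 2k+1
        have hk1 : 1 ≤ k := by omega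
        rcases Int.even_or_odd y with ⟨l, rfl⟩ | ⟨l, rfl⟩
        · -- y even : y = l + l
          have hkl : k * (k + 1) = (p : ℤ) * l ^ 2 := by
            have h4 : 4 * (k * (k + 1)) = 4 * ((p : ℤ) * l ^ 2) := by linear_combination hxy
            linarith
          have hco : IsCoprime k (k + 1) := ⟨-1, 1, by ring⟩
          have hpd : (p : ℤ) ∣ k * (k + 1) := ⟨l ^ 2, hkl⟩
          rcases (hpZ.dvd_mul.mp hpd) with ⟨m', hm'⟩ | ⟨n', hn'⟩
          · -- p ∣ k : new smaller Pell solution, recurse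
            have h1 : m' * (k + 1) = l ^ 2 :=
              mul_left_cancel₀ hpne (by linear_combination hkl - (k + 1) * hm')
            have hm'pos : 0 < m' := by nlinarith
            have hcm : IsCoprime m' (k + 1) :=
              hco.of_isCoprime_of_dvd_left ⟨p, by rw [hm']; ring⟩
            obtain ⟨a0, ha0⟩ := Int.sq_of_isCoprime hcm h1
            have ha0 : m' = a0 ^ 2 := pos_sq_choice hm'pos ha0
            obtain ⟨b0, hb0⟩ := Int.sq_of_isCoprime hcm.symm (by rw [mul_comm]; exact h1)
            have hb0 : k + 1 = b0 ^ 2 := pos_sq_choice (by omega) hb0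
            -- new solution (|b0|, |a0|) with |b0| < x
            have hb0ne : b0 ≠ 0 := by intro h; rw [h] at hb0; simp at hb0; omega
            have ha0ne : a0 ≠ 0 := by intro h; rw [h] at ha0; simp at ha0; omega
            have hb0abs : 1 ≤ |b0| := Int.one_le_abs (by exact hb0ne)
            have habs_sq : |b0| ^ 2 = b0 ^ 2 := sq_abs b0
            have hlt : |b0| < 2 * k + 1 := by nlinarith
            have hnat : (b0.natAbs : ℤ) = |b0| := (Int.abs_eq_natAbs b0).symm
            refine ih b0.natAbs (by omega) |b0| |a0| (abs_nonneg _) (by omega) ?_ ?_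
            · rw [sq_abs, sq_abs]
              linear_combination -hb0 + (p : ℤ) * ha0 + hm'
            · simpa using ha0ne
          · -- p ∣ k+1 : result a0^2 - p b0^2 = -1
            have h1 : k * n' = l ^ 2 :=
              mul_left_cancel₀ hpne (by linear_combination hkl - k * hn')
            have hn'pos : 0 < n' := by nlinarith
            have hcm : IsCoprime k n' :=
              hco.of_isCoprime_of_dvd_right ⟨p, by rw [hn']; ring⟩
            obtain ⟨a0, ha0⟩ := Int.sq_of_isCoprime hcm h1
            have ha0 : k = a0 ^ 2 := pos_sq_choice (by omega) ha0
            obtain ⟨b0, hb0⟩ := Int.sq_of_isCoprime hcm.symm (by rw [mul_comm]; exact h1)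
            have hb0 : n' = b0 ^ 2 := pos_sq_choice hn'pos hb0
            exact Or.inl ⟨a0, b0, by linear_combination -ha0 + (p : ℤ) * hb0 + hn'⟩
        · -- y odd : impossible
          exfalso
          obtain ⟨w, hw⟩ : ∃ w : ℤ, (p : ℤ) = 2 * w + 1 := ⟨(p : ℤ) / 2, by omega⟩
          rw [hw] at hxy
          have hdec : ∀ a b c : ZMod 4, (2 * a + 1) ^ 2 - (2 * c + 1) * (2 * b + 1) ^ 2 ≠ 1 := by
            decide
          refine hdec k l w ?_
          calc (2 * (k : ZMod 4) + 1) ^ 2 - (2 * (w : ZMod 4) + 1) * (2 * (l : ZMod 4) + 1) ^ 2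
              = (((2 * k + 1) ^ 2 - (2 * w + 1) * (2 * l + 1) ^ 2 : ℤ) : ZMod 4) := by
                push_cast; ring
            _ = ((1 : ℤ) : ZMod 4) := by rw [hxy]
            _ = 1 := by norm_num
  obtain ⟨x0, y0, hx0, hy0⟩ :=
    Pell.exists_of_not_isSquare (by exact_mod_cast hp.pos) hpZ.not_isSquare
  refine key x0.natAbs |x0| |y0| (abs_nonneg _) (le_of_eq (Int.abs_eq_natAbs x0)) ?_ ?_
  · rw [sq_abs, sq_abs]; exact hx0
  · simpa using hy0
open Polynomial

private lemma isIntegral_of_quad (a c : ℤ) (u : ℂ) (h : u ^ 2 - (a : ℂ) * u + (c : ℂ) = 0) :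
    IsIntegral ℤ u := by
  refine ⟨X ^ 2 + C (-a) * X + C c, ?_, ?_⟩
  · have he : ((X : ℤ[X]) ^ 2 + C (-a) * X + C c) = X ^ 2 + (C (-a) * X + C c) := by ring
    rw [he]
    exact Polynomial.monic_X_pow_add (lt_of_le_of_lt Polynomial.degree_linear_le (by norm_num))
  · simp only [Polynomial.eval₂_add, Polynomial.eval₂_mul, Polynomial.eval₂_pow,
      Polynomial.eval₂_X, Polynomial.eval₂_C, algebraMap_int_eq, Int.coe_castRingHom]
    push_cast
    linear_combination h

private lemma exists_c {a b pz : ℤ} (ha : a % 2 = 1) (hb : b % 2 = 1) (hpz : pz % 4 = 3) :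
    ∃ c : ℤ, a ^ 2 + pz * b ^ 2 = 4 * c := by
  obtain ⟨k, rfl⟩ : ∃ k, a = 2 * k + 1 := ⟨a / 2, by omega⟩
  obtain ⟨l, rfl⟩ : ∃ l, b = 2 * l + 1 := ⟨b / 2, by omega⟩
  obtain ⟨t, rfl⟩ : ∃ t, pz = 4 * t + 3 := ⟨pz / 4, by omega⟩
  exact ⟨k ^ 2 + k + t * (2 * l + 1) ^ 2 + 3 * l ^ 2 + 3 * l + 1, by ring⟩

private lemma negPell (p : ℕ) (hp : p.Prime) (h4 : p % 4 = 1) :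
    ∃ a b : ℤ, a ^ 2 - (p : ℤ) * b ^ 2 = -1 := by
  rcases descent p hp (by omega) with h | ⟨a, b, ha, hb, heq⟩
  · exact h
  · exfalso
    obtain ⟨k, rfl⟩ : ∃ k, a = 2 * k + 1 := ⟨a / 2, by omega⟩
    obtain ⟨l, rfl⟩ : ∃ l, b = 2 * l + 1 := ⟨b / 2, by omega⟩
    obtain ⟨t, ht⟩ : ∃ t : ℤ, (p : ℤ) = 4 * t + 1 := ⟨(p : ℤ) / 4, by omega⟩
    rw [ht] at heq
    have hdec : ∀ x y z : ZMod 8,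
        (2 * x + 1) ^ 2 - (4 * z + 1) * (2 * y + 1) ^ 2 ≠ -2 ∧
        (2 * x + 1) ^ 2 - (4 * z + 1) * (2 * y + 1) ^ 2 ≠ 2 := by decide
    have hcast : (2 * (k : ZMod 8) + 1) ^ 2 - (4 * (t : ZMod 8) + 1) * (2 * (l : ZMod 8) + 1) ^ 2
        = (((2 * k + 1) ^ 2 - (4 * t + 1) * (2 * l + 1) ^ 2 : ℤ) : ZMod 8) := by
      push_cast; ring
    rcases heq with heq | heq
    · exact (hdec k l t).1 (by rw [hcast, heq]; norm_num)
    · exact (hdec k l t).2 (by rw [hcast, heq]; norm_num)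

private lemma minusTwo (p : ℕ) (hp : p.Prime) (h8 : p % 8 = 3) :
    ∃ a b : ℤ, a % 2 = 1 ∧ b % 2 = 1 ∧ a ^ 2 - (p : ℤ) * b ^ 2 = -2 := by
  rcases descent p hp (by omega) with ⟨a, b, heq⟩ | ⟨a, b, ha, hb, heq⟩
  · exfalso
    obtain ⟨t, ht⟩ : ∃ t : ℤ, (p : ℤ) = 4 * t + 3 := ⟨(p : ℤ) / 4, by omega⟩
    rw [ht] at heq
    have hdec : ∀ x y z : ZMod 4, x ^ 2 - (4 * z + 3) * y ^ 2 ≠ -1 := by decide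
    refine hdec a b t ?_
    calc (a : ZMod 4) ^ 2 - (4 * (t : ZMod 4) + 3) * (b : ZMod 4) ^ 2
        = ((a ^ 2 - (4 * t + 3) * b ^ 2 : ℤ) : ZMod 4) := by push_cast; ring
      _ = ((-1 : ℤ) : ZMod 4) := by rw [heq]
      _ = -1 := by norm_num
  · rcases heq with heq | heq
    · exact ⟨a, b, ha, hb, heq⟩
    · exfalso
      obtain ⟨k, rfl⟩ : ∃ k, a = 2 * k + 1 := ⟨a / 2, by omega⟩
      obtain ⟨l, rfl⟩ : ∃ l, b = 2 * l + 1 := ⟨b / 2, by omega⟩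
      obtain ⟨t, ht⟩ : ∃ t : ℤ, (p : ℤ) = 8 * t + 3 := ⟨(p : ℤ) / 8, by omega⟩
      rw [ht] at heq
      have hdec : ∀ x y z : ZMod 8,
          (2 * x + 1) ^ 2 - (8 * z + 3) * (2 * y + 1) ^ 2 ≠ 2 := by decide
      refine hdec k l t ?_
      calc (2 * (k : ZMod 8) + 1) ^ 2 - (8 * (t : ZMod 8) + 3) * (2 * (l : ZMod 8) + 1) ^ 2
          = (((2 * k + 1) ^ 2 - (8 * t + 3) * (2 * l + 1) ^ 2 : ℤ) : ZMod 8) := by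
            push_cast; ring
        _ = ((2 : ℤ) : ZMod 8) := by rw [heq]
        _ = 2 := by norm_num

theorem neg_one_sum_two_squares_of_not_seven_mod_eight (p : ℕ) (hp : p.Prime)
    (hmod : p % 8 ≠ 7) (s : ℂ) (hs : s ^ 2 = -(p : ℂ)) :
    ∃ u v : ℂ, u ∈ IntermediateField.adjoin ℚ {s} ∧ v ∈ IntermediateField.adjoin ℚ {s} ∧
      IsIntegral ℤ u ∧ IsIntegral ℤ v ∧ u ^ 2 + v ^ 2 = -1 := by
  have hsK : s ∈ IntermediateField.adjoin ℚ {s} :=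
    IntermediateField.subset_adjoin ℚ {s} rfl
  have hsInt : IsIntegral ℤ s := by
    refine isIntegral_of_quad 0 p s ?_
    push_cast
    linear_combination hs
  have hintK : ∀ n : ℤ, (n : ℂ) ∈ IntermediateField.adjoin ℚ {s} := fun n =>
    intCast_mem _ n
  have hintInt : ∀ n : ℤ, IsIntegral ℤ ((n : ℤ) : ℂ) := fun n => by
    simpa using isIntegral_algebraMap (R := ℤ) (A := ℂ) (x := n)
  have hcase : p % 8 = 3 ∨ (∃ a b : ℤ, a ^ 2 - (p : ℤ) * b ^ 2 = -1) := by
    rcases hp.eq_two_or_odd with h2 | hoddp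
    · exact Or.inr ⟨1, 1, by rw [h2]; norm_num⟩
    · rcases (by omega : p % 8 = 3 ∨ p % 4 = 1) with h | h
      · exact Or.inl h
      · exact Or.inr (negPell p hp h)
  rcases hcase with h8 | ⟨a, b, hab⟩
  · -- p ≡ 3 mod 8
    obtain ⟨a, b, ha, hb, hab⟩ := minusTwo p hp h8
    obtain ⟨c, hc⟩ := exists_c ha hb (by omega : (p : ℤ) % 4 = 3)
    have habC : (a : ℂ) ^ 2 - (p : ℂ) * (b : ℂ) ^ 2 = -2 := by exact_mod_cast hab
    have hcC : (a : ℂ) ^ 2 + (p : ℂ) * (b : ℂ) ^ 2 = 4 * (c : ℂ) := by exact_mod_cast hc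
    have h2K : (2 : ℂ) ∈ IntermediateField.adjoin ℚ {s} := by
      have := hintK 2; simpa using this
    refine ⟨((a : ℂ) + (b : ℂ) * s) / 2, ((a : ℂ) - (b : ℂ) * s) / 2,
      div_mem (add_mem (hintK a) (mul_mem (hintK b) hsK)) h2K,
      div_mem (sub_mem (hintK a) (mul_mem (hintK b) hsK)) h2K, ?_, ?_, ?_⟩
    · refine isIntegral_of_quad a c _ ?_
      field_simp
      linear_combination (b : ℂ) ^ 2 * hs - hcC
    · refine isIntegral_of_quad a c _ ?_
      field_simp
      linear_combination (b : ℂ) ^ 2 * hs - hcC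
    · field_simp
      linear_combination 2 * (b : ℂ) ^ 2 * hs + 2 * habC
  · -- negative Pell case
    have habC : (a : ℂ) ^ 2 - (p : ℂ) * (b : ℂ) ^ 2 = -1 := by exact_mod_cast hab
    refine ⟨(b : ℂ) * s, (a : ℂ), mul_mem (hintK b) hsK, hintK a,
      (hintInt b).mul hsInt, hintInt a, ?_⟩
    linear_combination (b : ℂ) ^ 2 * hs + habC
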